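/- Let w : ∏_k A_k → ∏_k X_k be an n-partite process function with components w_k : ∏_{j≠k} A_j → X_k, where |A_k| = d_k, and for each party k and each setting x_k ∈ X_k let (v_k^{x_k}(a_k))_{a_k ∈ A_k} be an orthonormal basis of ℂ^{d_k} := EuclideanSpace ℂ (Fin d_k). Then the ∏_k d_k product vectors ψ^a (a ∈ ∏_k A_k), whose k-th local factor is v_k^{w_k(a_{∖k})}(a_k), are pairwise orthogonal: for all a ≠ a' in ∏_k A_k, ∏_{k=1}^n ⟪v_k^{w_k(a_{∖k})}(a_k), v_k^{w_k(a'_{∖k})}(a'_k)⟫ = 0. (Consequently, being ∏_k d_k pairwise orthogonal unit product vectors, they form an orthonormal basis of ⊗_k ℂ^{d_k}: the LOPF measurement is an effective distributed projective measurement.) -/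

import Mathlib

noncomputable section
open scoped BigOperators

/-- A (multipartite) process function: for every local intervention
`f = (f_k)_k` there is exactly one fixed point `x` with `w (f x) = x`. -/
def IsProcessFunction {ι : Type} {A X : ι → Type}
    (w : (∀ k, A k) → ∀ k, X k) : Prop :=
  ∀ f : ∀ k, X k → A k, ∃! x : ∀ k, X k, (w fun k => f k (x k)) = x

/-- **LOPF measurements are distributed projective measurements**: given an
`n`-partite process function with components `w_k : ∏_{j≠k} A_j → X_k`
(`|A_k| = d_k`) and, for each party and setting, an orthonormal basis
`(v_k^{x_k}(a_k))_{a_k}` of `ℂ^{d_k}`, the `∏_k d_k` product vectors `ψ^a`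
whose `k`-th local factor is `v_k^{w_k(a_{∖k})}(a_k)` are pairwise
orthogonal. -/
theorem processFunction_product_vectors_orthogonal
    {n : ℕ} (hn : 1 ≤ n) (d : Fin n → ℕ)
    (A : Fin n → Type) [∀ k, Fintype (A k)] [∀ k, Nonempty (A k)]
    (hA : ∀ k, Fintype.card (A k) = d k)
    (X : Fin n → Type) [∀ k, Fintype (X k)] [∀ k, Nonempty (X k)]
    -- the components of the process function
    (w : ∀ k : Fin n, (∀ j : {j : Fin n // j ≠ k}, A j) → X k)
    (hw : IsProcessFunction
      (fun (a : ∀ k, A k) (k : Fin n) => w k (fun j => a j)))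
    -- local orthonormal bases for each party and setting
    (v : ∀ k : Fin n, X k → A k → EuclideanSpace ℂ (Fin (d k)))
    (hv : ∀ (k : Fin n) (x : X k), Orthonormal ℂ (v k x)) :
    ∀ a a' : ∀ k, A k, a ≠ a' →
      (∏ k : Fin n,
        (inner ℂ (v k (w k fun j => a j) (a k))
          (v k (w k fun j => a' j) (a' k)) : ℂ)) = 0 := by
  classical
  intro a a' hne
  by_contra hprod
  set xk : ∀ k, X k := fun k => w k (fun j => a j) with hxk
  set x'k : ∀ k, X k := fun k => w k (fun j => a' j) with hx'k
  have hfac : ∀ k : Fin n,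
      (inner ℂ (v k (xk k) (a k)) (v k (x'k k) (a' k)) : ℂ) ≠ 0 := by
    intro k hk
    exact hprod (Finset.prod_eq_zero (Finset.mem_univ k) hk)
  have key : ∀ k, xk k = x'k k → a k = a' k := by
    intro k hx
    have h := hfac k
    rw [hx] at h
    have horth := (orthonormal_iff_ite.mp (hv k (x'k k))) (a k) (a' k)
    rw [horth] at h
    by_contra hak
    simp [hak] at h
  set f : ∀ k, X k → A k := fun k x => if x = x'k k then a' k else a k with hf
  have hfk : ∀ k, f k (xk k) = a k := by
    intro k
    by_cases h : xk k = x'k k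
    · simp only [hf, if_pos h]
      exact (key k h).symm
    · simp only [hf, if_neg h]
  have hfk' : ∀ k, f k (x'k k) = a' k := by
    intro k; simp [hf]
  obtain ⟨x, hx, huniq⟩ := hw f
  have h1 : xk = x := by
    apply huniq
    have : (fun k => f k (xk k)) = a := funext hfk
    rw [this]
  have h2 : x'k = x := by
    apply huniq
    have : (fun k => f k (x'k k)) = a' := funext hfk'
    rw [this]
  exact hne (funext fun k => key k (by rw [h1, h2]))

end
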